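/- Let N ≥ 1 and m ≥ 1, let M₀, M₁, …, M_m be N×N complex Hermitian matrices, and let v ∈ ℂ^N be nonzero. Suppose there exists μ ∈ ℝ^m such that H := M₀ + Σ_{j=1}^m μ_j M_j is positive semidefinite, H v = 0, and ker(x ↦ H x) = span{v}, and suppose v* M_{j₀} v ≠ 0 for some index j₀. Let N₁, …, N_p be arbitrary additional N×N complex Hermitian matrices. Then for every positive semidefinite Hermitian matrix X satisfying both Tr(M_j X) = v* M_j v for all j = 1,…,m and Tr(N_k X) = v* N_k v for all k = 1,…,p, one has Tr(M₀ X) ≥ Tr(M₀ v v*), with equality only if X = v v*. That is, adding arbitrary extra measurement constraints satisfied by v preserves the exact recovery of v v* as the unique optimal solution. -/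

import Mathlib

open Matrix ComplexOrder

lemma trace_mul_vecMulVec' {N : ℕ} (A : Matrix (Fin N) (Fin N) ℂ) (v : Fin N → ℂ) :
    (A * vecMulVec v (star v)).trace = star v ⬝ᵥ (A *ᵥ v) := by
  simp only [Matrix.trace, Matrix.diag, Matrix.mul_apply, vecMulVec_apply, dotProduct,
    Matrix.mulVec, Pi.star_apply, Finset.mul_sum]
  refine Finset.sum_congr rfl fun i _ => Finset.sum_congr rfl fun k _ => ?_
  ring

lemma trace_mul_conjTranspose_self' {N : ℕ} (B : Matrix (Fin N) (Fin N) ℂ) :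
    ∃ r : ℝ, 0 ≤ r ∧ (B * Bᴴ).trace = (r : ℂ) ∧ (r = 0 → B = 0) := by
  refine ⟨∑ i, ∑ j, Complex.normSq (B i j),
    Finset.sum_nonneg fun i _ => Finset.sum_nonneg fun j _ => Complex.normSq_nonneg _, ?_, ?_⟩
  · simp only [Matrix.trace, Matrix.diag, Matrix.mul_apply, Matrix.conjTranspose_apply,
      Complex.star_def, Complex.mul_conj]
    push_cast
    rfl
  · intro h
    have h2 : ∀ i ∈ Finset.univ, ∀ j ∈ (Finset.univ : Finset (Fin N)),
        Complex.normSq (B i j) = 0 := by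
      have := (Finset.sum_eq_zero_iff_of_nonneg (fun i _ =>
        Finset.sum_nonneg fun j _ => Complex.normSq_nonneg _)).mp h
      intro i hi j hj
      exact (Finset.sum_eq_zero_iff_of_nonneg (fun j _ => Complex.normSq_nonneg _)).mp
        (this i hi) j hj
    ext i j
    simpa using Complex.normSq_eq_zero.mp (h2 i (Finset.mem_univ i) j (Finset.mem_univ j))

section

open scoped MatrixOrder

lemma trace_mul_psd' {N : ℕ} {H X : Matrix (Fin N) (Fin N) ℂ}
    (hH : H.PosSemidef) (hX : X.PosSemidef) :
    ∃ r : ℝ, 0 ≤ r ∧ (H * X).trace = (r : ℂ) ∧ (r = 0 → H * X = 0) := by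
  obtain ⟨r, hr0, hrtr, hrB⟩ := trace_mul_conjTranspose_self' (CFC.sqrt H * CFC.sqrt X)
  have hBH : (CFC.sqrt H * CFC.sqrt X)ᴴ = CFC.sqrt X * CFC.sqrt H := by
    rw [conjTranspose_mul, (CFC.sqrt_nonneg H).posSemidef.1.eq, (CFC.sqrt_nonneg X).posSemidef.1.eq]
  have hHX : H * X = CFC.sqrt H * (CFC.sqrt H * CFC.sqrt X) * CFC.sqrt X := by
    conv_lhs => rw [← CFC.sqrt_mul_sqrt_self H hH.nonneg, ← CFC.sqrt_mul_sqrt_self X hX.nonneg]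
    noncomm_ring
  have htr : (H * X).trace = ((CFC.sqrt H * CFC.sqrt X) * (CFC.sqrt H * CFC.sqrt X)ᴴ).trace := by
    have e1 : H * X = CFC.sqrt H * ((CFC.sqrt H * X)) := by
      conv_lhs => rw [← CFC.sqrt_mul_sqrt_self H hH.nonneg]
      noncomm_ring
    rw [e1, Matrix.trace_mul_comm, hBH]
    congr 1
    conv_lhs => rw [← CFC.sqrt_mul_sqrt_self X hX.nonneg]
    noncomm_ring
  refine ⟨r, hr0, htr.trans hrtr, fun h => ?_⟩
  rw [hHX, hrB h]
  simp

end

lemma trace_expand' {N m : ℕ} (M₀ : Matrix (Fin N) (Fin N) ℂ)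
    (M : Fin m → Matrix (Fin N) (Fin N) ℂ) (μ : Fin m → ℝ) (Y : Matrix (Fin N) (Fin N) ℂ) :
    ((M₀ + ∑ j, (μ j : ℂ) • M j) * Y).trace
      = (M₀ * Y).trace + ∑ j, (μ j : ℂ) * (M j * Y).trace := by
  simp [add_mul, Finset.sum_mul, smul_mul_assoc, Matrix.trace_add, Matrix.trace_sum,
    Matrix.trace_smul, smul_eq_mul]

theorem stmt_2 (N m p : ℕ) (hN : 1 ≤ N) (hm : 1 ≤ m)
    (M₀ : Matrix (Fin N) (Fin N) ℂ) (M : Fin m → Matrix (Fin N) (Fin N) ℂ)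
    (hM₀ : M₀.IsHermitian) (hM : ∀ j, (M j).IsHermitian)
    (v : Fin N → ℂ) (hv : v ≠ 0)
    (μ : Fin m → ℝ)
    (hPSD : (M₀ + ∑ j, (μ j : ℂ) • M j).PosSemidef)
    (hHv : (M₀ + ∑ j, (μ j : ℂ) • M j) *ᵥ v = 0)
    (hker : ∀ x : Fin N → ℂ,
      (M₀ + ∑ j, (μ j : ℂ) • M j) *ᵥ x = 0 ↔ ∃ c : ℂ, x = c • v)
    (j₀ : Fin m) (hj₀ : star v ⬝ᵥ (M j₀ *ᵥ v) ≠ 0)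
    (Nmat : Fin p → Matrix (Fin N) (Fin N) ℂ)
    (hNmat : ∀ k, (Nmat k).IsHermitian) :
    ∀ X : Matrix (Fin N) (Fin N) ℂ, X.PosSemidef →
      (∀ j, (M j * X).trace = star v ⬝ᵥ (M j *ᵥ v)) →
      (∀ k, (Nmat k * X).trace = star v ⬝ᵥ (Nmat k *ᵥ v)) →
      ((M₀ * vecMulVec v (star v)).trace.re ≤ (M₀ * X).trace.re ∧
        ((M₀ * X).trace = (M₀ * vecMulVec v (star v)).trace →
          X = vecMulVec v (star v))) := by
  intro X hX hMX _
  set H := M₀ + ∑ j, (μ j : ℂ) • M j with hHdef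
  set V := vecMulVec v (star v) with hVdef
  obtain ⟨r, hr0, hrtr, hr⟩ := trace_mul_psd' hPSD hX
  have hHV : (H * V).trace = 0 := by
    rw [hVdef, trace_mul_vecMulVec', hHv]
    simp
  have hVtr : (M₀ * V).trace + ∑ j, (μ j : ℂ) * (M j * V).trace = 0 := by
    rw [← trace_expand', hHV]
  have hXtr : (M₀ * X).trace + ∑ j, (μ j : ℂ) * (M j * X).trace = (r : ℂ) := by
    rw [← trace_expand', hrtr]
  have hMV : ∀ j, (M j * V).trace = (M j * X).trace := by
    intro j
    rw [hVdef, trace_mul_vecMulVec', hMX j]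
  have hsum : ∑ j, (μ j : ℂ) * (M j * V).trace = ∑ j, (μ j : ℂ) * (M j * X).trace :=
    Finset.sum_congr rfl fun j _ => by rw [hMV j]
  have hkey : (M₀ * X).trace = (M₀ * V).trace + (r : ℂ) := by
    rw [hsum] at hVtr
    linear_combination hXtr - hVtr
  constructor
  · have := congrArg Complex.re hkey
    simp only [Complex.add_re, Complex.ofReal_re] at this
    linarith
  · intro heq
    have hr0' : (r : ℂ) = 0 := by
      rw [heq] at hkey
      linear_combination -hkey
    have hHX0 : H * X = 0 := hr (by exact_mod_cast hr0')
    have hcols : ∀ jj, (H *ᵥ fun i => X i jj) = 0 := by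
      intro jj
      funext i
      have h0 : (H * X) i jj = 0 := by rw [hHX0]; rfl
      simpa [Matrix.mul_apply, Matrix.mulVec, dotProduct] using h0
    choose c hc using fun jj => (hker _).mp (hcols jj)
    have hXij : ∀ i jj, X i jj = c jj * v i := by
      intro i jj
      have := congrFun (hc jj) i
      simpa using this
    obtain ⟨i₀, hi₀'⟩ := Function.ne_iff.mp hv
    have hi₀ : v i₀ ≠ 0 := by simpa using hi₀'
    have herm : ∀ jj, c jj * v i₀ = star (c i₀) * star (v jj) := by
      intro jj
      have h1 : X i₀ jj = star (X jj i₀) := by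
        conv_lhs => rw [← hX.1.eq]
        exact X.conjTranspose_apply jj i₀
      rw [hXij i₀ jj, hXij jj i₀] at h1
      simpa [star_mul', mul_comm] using h1
    set t := star (c i₀) / v i₀ with ht
    have hcj : ∀ jj, c jj = t * star (v jj) := by
      intro jj
      rw [ht, div_mul_eq_mul_div, eq_div_iff hi₀]
      linear_combination (herm jj)
    have hXeq : X = t • V := by
      ext i jj
      rw [hVdef]
      simp only [Matrix.smul_apply, vecMulVec_apply, Pi.star_apply, smul_eq_mul]
      rw [hXij i jj, hcj jj]
      ring
    have ht1 : t = 1 := by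
      have h1 := hMX j₀
      rw [hXeq, Matrix.mul_smul, Matrix.trace_smul, smul_eq_mul, hVdef,
        trace_mul_vecMulVec'] at h1
      exact mul_right_cancel₀ hj₀ (h1.trans (one_mul _).symm)
    rw [hXeq, ht1, one_smul]
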